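/- Every weakly selectively highly divergent (WSHD) topological space is openly highly divergent (OHD). -/
import Mathlib


open Filter Topology Set

/-- `x : ℕ → X` has no convergent subsequence. -/
def NoConvSubseq {X : Type*} [TopologicalSpace X] (x : ℕ → X) : Prop :=
  ∀ φ : ℕ → ℕ, StrictMono φ → ∀ y : X, ¬ Filter.Tendsto (x ∘ φ) Filter.atTop (nhds y)

/-- Selectively highly divergent. -/
def SHD (X : Type*) [TopologicalSpace X] : Prop :=
  ∀ U : ℕ → Set X, (∀ n, IsOpen (U n)) → (∀ n, (U n).Nonempty) →
    ∃ x : ℕ → X, (∀ n, x n ∈ U n) ∧ NoConvSubseq x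

/-- Weakly selectively highly divergent. -/
def WSHD (X : Type*) [TopologicalSpace X] : Prop :=
  ∀ U : ℕ → Set X, (∀ n, IsOpen (U n)) → (∀ n, (U n).Nonempty) →
    ∃ A : Set ℕ, A.Infinite ∧ ∃ x : ℕ → X, (∀ n ∈ A, x n ∈ U n) ∧
      ∀ φ : ℕ → ℕ, StrictMono φ → (∀ n, φ n ∈ A) →
        ∀ y : X, ¬ Filter.Tendsto (x ∘ φ) Filter.atTop (nhds y)

/-- A sequence of nonempty open sets converges to a point. -/
def OpenSeqTendsto {X : Type*} [TopologicalSpace X] (U : ℕ → Set X) (x : X) : Prop :=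
  ∀ V : Set X, IsOpen V → x ∈ V → ∃ m : ℕ, ∀ n ≥ m, U n ⊆ V

/-- Openly highly divergent: no sequence of nonempty open sets converges to a point. -/
def OHD (X : Type*) [TopologicalSpace X] : Prop :=
  ¬ ∃ (U : ℕ → Set X) (x : X),
      (∀ n, IsOpen (U n)) ∧ (∀ n, (U n).Nonempty) ∧ OpenSeqTendsto U x

/-- `x` has a countable local (neighbourhood) base. -/
def HasCountableLocalBase {X : Type*} [TopologicalSpace X] (x : X) : Prop :=
  ∃ B : Set (Set X), B.Countable ∧ (∀ V ∈ B, IsOpen V ∧ x ∈ V) ∧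
    ∀ U : Set X, IsOpen U → x ∈ U → ∃ V ∈ B, V ⊆ U

/-- `x` has a countable local π-base. -/
def HasCountableLocalPiBase {X : Type*} [TopologicalSpace X] (x : X) : Prop :=
  ∃ B : Set (Set X), B.Countable ∧ (∀ V ∈ B, IsOpen V ∧ V.Nonempty) ∧
    ∀ U : Set X, IsOpen U → x ∈ U → ∃ V ∈ B, V ⊆ U

/-- UC: every point has uncountable character. -/
def UC (X : Type*) [TopologicalSpace X] : Prop := ∀ x : X, ¬ HasCountableLocalBase x

/-- π-UC: every point has uncountable π-character. -/
def PiUC (X : Type*) [TopologicalSpace X] : Prop := ∀ x : X, ¬ HasCountableLocalPiBase x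

/-- Sequentially discrete: every convergent sequence is eventually constant. -/
def SD (X : Type*) [TopologicalSpace X] : Prop :=
  ∀ (x : ℕ → X) (y : X), Filter.Tendsto x Filter.atTop (nhds y) →
    ∃ m : ℕ, ∀ n ≥ m, x n = x m

/-- The Pixley–Roy hyperspace: nonempty finite subsets of `X`. -/
def PR (X : Type*) : Type _ := {F : Set X // F.Finite ∧ F.Nonempty}

/-- The basic sets `[F, U]` of the Pixley–Roy topology. -/
def PRBasic {X : Type*} (F U : Set X) : Set (PR X) :=
  {G : PR X | F ⊆ G.1 ∧ G.1 ⊆ U}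

instance PR.instTopologicalSpace {X : Type*} [TopologicalSpace X] :
    TopologicalSpace (PR X) :=
  TopologicalSpace.generateFrom
    {S | ∃ (F : PR X) (U : Set X), IsOpen U ∧ S = PRBasic F.1 U}

/-- P-space: countable intersections of open sets are open. -/
def PSpace (X : Type*) [TopologicalSpace X] : Prop :=
  ∀ U : ℕ → Set X, (∀ n, IsOpen (U n)) → IsOpen (⋂ n, U n)

/-- `Σ(Y, p, κ)`: points of `Y^κ` differing from the constant `p` on countably many coordinates. -/
def SigmaProd (Y : Type*) (p : Y) (κ : Type*) : Set (κ → Y) :=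
  {x | {α : κ | x α ≠ p}.Countable}

/-- `σ(Y, p, κ)`: points of `Y^κ` differing from the constant `p` on finitely many coordinates. -/
def SmallSigmaProd (Y : Type*) (p : Y) (κ : Type*) : Set (κ → Y) :=
  {x | {α : κ | x α ≠ p}.Finite}

theorem statement6 {X : Type*} [TopologicalSpace X] (h : WSHD X) : OHD X := by
  rintro ⟨U, y, hopen, hne, hconv⟩
  obtain ⟨A, hA, x, hx, hdiv⟩ := h U hopen hne
  set p : ℕ → Prop := fun n => n ∈ A
  have hpinf : (setOf p).Infinite := hA
  refine hdiv (Nat.nth p) (Nat.nth_strictMono hpinf) (fun n => Nat.nth_mem_of_infinite hpinf n) y ?_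
  rw [tendsto_nhds]
  intro V hV hyV
  obtain ⟨m, hm⟩ := hconv V hV hyV
  filter_upwards [Filter.eventually_ge_atTop m] with k hk
  exact hm (Nat.nth p k) (le_trans hk ((Nat.nth_strictMono hpinf).le_apply)) (hx _ (Nat.nth_mem_of_infinite hpinf k))
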